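/- Let t be a nonnegative integer and n ≥ 6t+2 a positive integer. The numerical semigroup S_{n,t} is symmetric with Frobenius number 2n−1: for every natural number m ≤ 2n−1, m belongs to S_{n,t} if and only if 2n−1−m does not belong to S_{n,t}. -/

import Mathlib

/-- The generating set `G_{n,t}`. -/
def Gset (n t : ℕ) : Set ℕ :=
  {m | (∃ i < t, m = n - 2*t + 4*i ∨ m = n - 2*t + 4*i + 1) ∨
       (n + 2*t ≤ m ∧ m ≤ 2*n - 4*t - 2) ∨
       (∃ j < t, m = 2*n - 4*t + 4*j - 1)}

/-- The numerical semigroup `S_{n,t}`, the additive submonoid of ℕ generated by `G_{n,t}`. -/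
def Sgen (n t : ℕ) : AddSubmonoid ℕ := AddSubmonoid.closure (Gset n t)

/-- Small-generator predicate. -/
def SmallP (n t m : ℕ) : Prop := ∃ i < t, m = n - 2*t + 4*i ∨ m = n - 2*t + 4*i + 1

/-- Invariant preserved by the monoid operations. -/
def Qinv (n t m : ℕ) : Prop :=
  m = 0 ∨ SmallP n t m ∨ (n + 2*t ≤ m ∧ m ≤ 2*n - 2) ∨ 2*n ≤ m

lemma qinv_of_mem (t n : ℕ) (hn : 6*t + 2 ≤ n) {m : ℕ} (hm : m ∈ Sgen n t) :
    Qinv n t m := by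
  refine AddSubmonoid.closure_induction ?_ ?_ ?_ hm
  · rintro x (hx | ⟨h1, h2⟩ | ⟨j, hj, rfl⟩)
    · exact Or.inr (Or.inl hx)
    · exact Or.inr (Or.inr (Or.inl ⟨h1, by omega⟩))
    · exact Or.inr (Or.inr (Or.inl ⟨by omega, by omega⟩))
  · exact Or.inl rfl
  · rintro x y hx hy qx qy
    rcases qx with rfl | qx
    · simpa using qy
    rcases qy with rfl | qy
    · rw [add_zero]; exact Or.inr qx
    right; right
    rcases qx with ⟨i, hi, hxv⟩ | qx <;> rcases qy with ⟨i', hi', hyv⟩ | qy <;> omega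

/-- The membership characterization predicate. -/
def Pchar (n t m : ℕ) : Prop :=
  m = 0 ∨ (n - 2*t ≤ m ∧ m ≤ n + 2*t - 1 ∧ (m - (n - 2*t)) % 4 ≤ 1) ∨
    (n + 2*t ≤ m ∧ m ≤ 2*n - 2)

lemma mem_of_pchar (t n : ℕ) (hn : 6*t + 2 ≤ n) {m : ℕ} (hP : Pchar n t m) :
    m ∈ Sgen n t := by
  rcases hP with rfl | ⟨h1, h2, h3⟩ | ⟨h1, h2⟩
  · exact zero_mem _
  · apply AddSubmonoid.subset_closure
    refine Or.inl ⟨(m - (n - 2*t)) / 4, by omega, by omega⟩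
  · by_cases hmid : m ≤ 2*n - 4*t - 2
    · exact AddSubmonoid.subset_closure (Or.inr (Or.inl ⟨h1, hmid⟩))
    · have ht : 1 ≤ t := by omega
      set d := m - (2*n - 4*t - 1) with hd
      have hdlt : d ≤ 4*t - 1 := by omega
      have hk : d / 4 < t := by omega
      rcases (by omega : d % 4 = 0 ∨ d % 4 = 1 ∨ d % 4 = 2 ∨ d % 4 = 3) with h | h | h | h
      · apply AddSubmonoid.subset_closure
        exact Or.inr (Or.inr ⟨d / 4, hk, by omega⟩)
      · have : m = (n - 2*t + 4*(d/4)) + (n - 2*t) := by omega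
        rw [this]
        exact add_mem (AddSubmonoid.subset_closure (Or.inl ⟨d/4, hk, Or.inl rfl⟩))
          (AddSubmonoid.subset_closure (Or.inl ⟨0, ht, Or.inl (by omega)⟩))
      · have : m = (n - 2*t + 4*(d/4) + 1) + (n - 2*t) := by omega
        rw [this]
        exact add_mem (AddSubmonoid.subset_closure (Or.inl ⟨d/4, hk, Or.inr rfl⟩))
          (AddSubmonoid.subset_closure (Or.inl ⟨0, ht, Or.inl (by omega)⟩))
      · have : m = (n - 2*t + 4*(d/4) + 1) + (n - 2*t + 1) := by
          omega
        rw [this]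
        exact add_mem (AddSubmonoid.subset_closure (Or.inl ⟨d/4, hk, Or.inr rfl⟩))
          (AddSubmonoid.subset_closure (Or.inl ⟨0, ht, Or.inr (by omega)⟩))

lemma mem_iff_pchar (t n : ℕ) (hn : 6*t + 2 ≤ n) {m : ℕ} (hm : m ≤ 2*n - 1) :
    m ∈ Sgen n t ↔ Pchar n t m := by
  constructor
  · intro h
    have hq := qinv_of_mem t n hn h
    rcases hq with rfl | ⟨i, hi, hv⟩ | h' | h'
    · exact Or.inl rfl
    · exact Or.inr (Or.inl (by omega))
    · exact Or.inr (Or.inr h')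
    · omega
  · exact mem_of_pchar t n hn

theorem stmt_5 (t n : ℕ) (hn : 6*t + 2 ≤ n) :
    ∀ m : ℕ, m ≤ 2*n - 1 → (m ∈ Sgen n t ↔ (2*n - 1 - m) ∉ Sgen n t) := by
  intro m hm
  rw [mem_iff_pchar t n hn hm, mem_iff_pchar t n hn (by omega : 2*n - 1 - m ≤ 2*n - 1)]
  unfold Pchar
  omega
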